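/- Let μ_n be a sequence of signed Radon measures on a compact set K ⊂ ℝ² converging weakly-* to μ, with sup_n |μ_n|(K) < ∞, and let b : K → ℝ be continuous with b ≥ b₀ > 0. If ∫ b d|μ_n| → ∫ b dμ and ∫ b dμ_n → ∫ b dμ, then |μ_n| converges weakly-* to μ; in particular μ ≥ 0. -/

import Mathlib

open MeasureTheory Filter

/-- if signed measures `μ_n = P_n - N_n` (Jordan decompositions) on a
compact set `K` converge weakly-* to `μ = P - N` with bounded total variations, `b`
is continuous with `b ≥ b₀ > 0`, and both `∫ b d|μ_n| → ∫ b dμ` and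
`∫ b dμ_n → ∫ b dμ`, then `|μ_n| ⇀ μ` weakly-*; in particular `μ ≥ 0`
(i.e. the negative part `N` of `μ` vanishes). -/
theorem stmt4 (K : Set (ℝ × ℝ)) (hK : IsCompact K) (b₀ : ℝ) (hb₀ : 0 < b₀)
    (b : (ℝ × ℝ) → ℝ) (hbc : Continuous b) (hb : ∀ x ∈ K, b₀ ≤ b x)
    (P N : ℕ → Measure (ℝ × ℝ)) (Pl Nl : Measure (ℝ × ℝ))
    (hPf : ∀ n, IsFiniteMeasure (P n)) (hNf : ∀ n, IsFiniteMeasure (N n))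
    (hPlf : IsFiniteMeasure Pl) (hNlf : IsFiniteMeasure Nl)
    (hsing : ∀ n, Measure.MutuallySingular (P n) (N n))
    (hsingl : Measure.MutuallySingular Pl Nl)
    (hsupp : ∀ n, P n Kᶜ = 0 ∧ N n Kᶜ = 0) (hsuppl : Pl Kᶜ = 0 ∧ Nl Kᶜ = 0)
    (hTV : ∃ Cb : ℝ, ∀ n, (P n Set.univ).toReal + (N n Set.univ).toReal ≤ Cb)
    (hweak : ∀ f : (ℝ × ℝ) → ℝ, Continuous f → HasCompactSupport f →
      Tendsto (fun n => (∫ x, f x ∂(P n)) - ∫ x, f x ∂(N n)) atTop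
        (nhds ((∫ x, f x ∂Pl) - ∫ x, f x ∂Nl)))
    (hbabs : Tendsto (fun n => ∫ x, b x ∂(P n + N n)) atTop
        (nhds ((∫ x, b x ∂Pl) - ∫ x, b x ∂Nl)))
    (hbsigned : Tendsto (fun n => (∫ x, b x ∂(P n)) - ∫ x, b x ∂(N n)) atTop
        (nhds ((∫ x, b x ∂Pl) - ∫ x, b x ∂Nl))) :
    (∀ f : (ℝ × ℝ) → ℝ, Continuous f → HasCompactSupport f →
      Tendsto (fun n => ∫ x, f x ∂(P n + N n)) atTop
        (nhds ((∫ x, f x ∂Pl) - ∫ x, f x ∂Nl))) ∧ Nl = 0 := by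
  haveI := hPlf; haveI := hNlf
  -- `b` is integrable w.r.t. any finite measure supported in `K`
  obtain ⟨Cb, hCb⟩ := hK.exists_bound_of_continuousOn hbc.continuousOn
  have hint : ∀ (μ : Measure (ℝ × ℝ)), IsFiniteMeasure μ → μ Kᶜ = 0 → Integrable b μ := by
    intro μ hμf hμ
    haveI := hμf
    refine Integrable.mono' (integrable_const Cb) hbc.aestronglyMeasurable ?_
    filter_upwards [mem_ae_iff.mpr hμ] with x hx
    exact hCb x hx
  have hintP : ∀ n, Integrable b (P n) := fun n => hint (P n) (hPf n) (hsupp n).1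
  have hintN : ∀ n, Integrable b (N n) := fun n => hint (N n) (hNf n) (hsupp n).2
  -- `∫ b dN_n → 0`
  have hNb : Tendsto (fun n => ∫ x, b x ∂(N n)) atTop (nhds 0) := by
    have h := hbabs.sub hbsigned
    rw [sub_self] at h
    have h' : ∀ n, (∫ x, b x ∂(P n + N n)) - ((∫ x, b x ∂(P n)) - ∫ x, b x ∂(N n))
        = 2 * ∫ x, b x ∂(N n) := by
      intro n
      rw [integral_add_measure (hintP n) (hintN n)]; ring
    have h2 := (h.congr h').div_const 2
    simp only [zero_div] at h2
    refine h2.congr fun n => ?_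
    ring
  -- total masses of `N_n` tend to 0
  have hNuniv : Tendsto (fun n => ((N n) Set.univ).toReal) atTop (nhds 0) := by
    have hbd : ∀ n, ((N n) Set.univ).toReal ≤ (∫ x, b x ∂(N n)) / b₀ := by
      intro n
      haveI := hNf n
      have h1 : ∫ _x, b₀ ∂(N n) ≤ ∫ x, b x ∂(N n) := by
        refine integral_mono_ae (integrable_const b₀) (hintN n) ?_
        filter_upwards [mem_ae_iff.mpr (hsupp n).2] with x hx
        exact hb x hx
      rw [integral_const, smul_eq_mul, measureReal_def] at h1
      rw [le_div_iff₀ hb₀]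
      linarith
    have hlim := hNb.div_const b₀
    rw [zero_div] at hlim
    exact squeeze_zero (fun n => ENNReal.toReal_nonneg) hbd hlim
  -- first conclusion: weak-* convergence of `|μ_n| = P_n + N_n`
  have main : ∀ f : (ℝ × ℝ) → ℝ, Continuous f → HasCompactSupport f →
      Tendsto (fun n => ∫ x, f x ∂(P n + N n)) atTop
        (nhds ((∫ x, f x ∂Pl) - ∫ x, f x ∂Nl)) := by
    intro f hf hfs
    obtain ⟨Cf, hCf⟩ := hf.bounded_above_of_compact_support hfs
    have hfN0 : Tendsto (fun n => ∫ x, f x ∂(N n)) atTop (nhds 0) := by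
      have hlim : Tendsto (fun n => Cf * ((N n) Set.univ).toReal) atTop (nhds 0) := by
        have := hNuniv.const_mul Cf
        rwa [mul_zero] at this
      refine squeeze_zero_norm (fun n => ?_) hlim
      haveI := hNf n
      exact norm_integral_le_of_norm_le_const (Eventually.of_forall hCf)
    have h2 : Tendsto (fun n => (2:ℝ) * ∫ x, f x ∂(N n)) atTop (nhds 0) := by
      have := hfN0.const_mul (2:ℝ)
      rwa [mul_zero] at this
    have h := (hweak f hf hfs).add h2
    rw [add_zero] at h
    refine h.congr fun n => ?_
    haveI := hPf n; haveI := hNf n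
    rw [integral_add_measure (hf.integrable_of_hasCompactSupport hfs)
      (hf.integrable_of_hasCompactSupport hfs)]
    ring
  refine ⟨main, ?_⟩
  -- positivity of the limit functional
  have hpos : ∀ f : (ℝ × ℝ) → ℝ, Continuous f → HasCompactSupport f → (∀ x, 0 ≤ f x) →
      ∫ x, f x ∂Nl ≤ ∫ x, f x ∂Pl := by
    intro f hf hfs hf0
    have h := main f hf hfs
    have h0 : (0:ℝ) ≤ (∫ x, f x ∂Pl) - ∫ x, f x ∂Nl := by
      refine ge_of_tendsto' h fun n => ?_
      exact integral_nonneg hf0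
    linarith
  -- now show `Nl = 0` using regularity and Urysohn's lemma
  obtain ⟨S, hSm, hPS, hNS⟩ := hsingl
  have hNuniveq : Nl Set.univ = Nl S := by
    refine le_antisymm ?_ (measure_mono (Set.subset_univ S))
    calc Nl Set.univ = Nl (S ∪ Sᶜ) := by rw [Set.union_compl_self]
      _ ≤ Nl S + Nl Sᶜ := measure_union_le _ _
      _ = Nl S := by rw [hNS, add_zero]
  have key : ∀ ε : ℝ, 0 < ε → (Nl Set.univ).toReal ≤ 0 + ε := by
    intro ε hε
    set δ : ENNReal := ENNReal.ofReal (ε / 2) with hδdef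
    have hδ0 : δ ≠ 0 := by
      simp [hδdef, ENNReal.ofReal_eq_zero]
      linarith
    -- inner regularity: compact C ⊆ S with Nl S < Nl C + δ
    obtain ⟨C, hCS, hCcomp, hCmeas⟩ := hSm.exists_isCompact_lt_add (measure_ne_top Nl S) hδ0
    have hPC : Pl C = 0 := measure_mono_null hCS hPS
    -- outer regularity: open U ⊇ C with Pl U < Pl C + δ = δ
    obtain ⟨U, hCU, hUopen, hPU⟩ := C.exists_isOpen_lt_add (measure_ne_top Pl C) hδ0
    rw [hPC, zero_add] at hPU
    -- Urysohn function
    obtain ⟨f, hf1, hf0, hfcs, hficc⟩ := exists_continuous_one_zero_of_isCompact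
      hCcomp hUopen.isClosed_compl
      (Set.disjoint_compl_right_iff_subset.mpr hCU)
    have hfnn : ∀ x, 0 ≤ f x := fun x => (hficc x).1
    have hfintN : Integrable f Nl := f.continuous.integrable_of_hasCompactSupport hfcs
    have hfintP : Integrable f Pl := f.continuous.integrable_of_hasCompactSupport hfcs
    have hCm : MeasurableSet C := hCcomp.isClosed.measurableSet
    have hUm : MeasurableSet U := hUopen.measurableSet
    have hNC : (Nl C).toReal ≤ ∫ x, f x ∂Nl := by
      rw [← measureReal_def, ← integral_indicator_one hCm]
      refine integral_mono ((integrable_const (1:ℝ)).indicator hCm) hfintN fun x => ?_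
      by_cases hx : x ∈ C
      · simp [Set.indicator_of_mem hx, hf1 hx]
      · simp [Set.indicator_of_notMem hx, hfnn x]
    have hPUf : ∫ x, f x ∂Pl ≤ (Pl U).toReal := by
      rw [← measureReal_def, ← integral_indicator_one hUm]
      refine integral_mono hfintP ((integrable_const (1:ℝ)).indicator hUm) fun x => ?_
      by_cases hx : x ∈ U
      · simpa [Set.indicator_of_mem hx] using (hficc x).2
      · simp [Set.indicator_of_notMem hx, hf0 hx]
    -- putting everything together in ℝ
    have h1 : (Nl S).toReal ≤ (Nl C).toReal + ε / 2 := by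
      have ha : (Nl S).toReal ≤ (Nl C + δ).toReal :=
        ENNReal.toReal_mono (by simp [hδdef, measure_ne_top]) hCmeas.le
      rwa [ENNReal.toReal_add (measure_ne_top _ _) (by simp [hδdef]),
        ENNReal.toReal_ofReal (by linarith)] at ha
    have h2 : (Pl U).toReal ≤ ε / 2 := by
      have := ENNReal.toReal_mono (by simp [hδdef]) hPU.le
      rwa [ENNReal.toReal_ofReal (by linarith)] at this
    have h3 := hpos f f.continuous hfcs hfnn
    rw [hNuniveq]
    linarith
  have hle : (Nl Set.univ).toReal ≤ 0 := le_of_forall_pos_le_add key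
  have h0 : (Nl Set.univ).toReal = 0 := le_antisymm hle ENNReal.toReal_nonneg
  have : Nl Set.univ = 0 := by
    rcases (ENNReal.toReal_eq_zero_iff _).mp h0 with h | h
    · exact h
    · exact absurd h (measure_ne_top Nl _)
  exact Measure.measure_univ_eq_zero.mp this
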